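/- Let x₁ = [[2,3],[3,4]] and x₂ = [[3,10],[1,3]] in GL₂(ℤ). Then x₁ and x₂ are not conjugate in GL₂(ℤ), and x₁⁻¹ and x₂ are not conjugate in GL₂(ℤ). -/

import Mathlib

open Matrix

theorem stmt_10 :
    (¬ ∃ p : Matrix (Fin 2) (Fin 2) ℤ, IsUnit p ∧
        p * (!![2, 3; 3, 4] : Matrix (Fin 2) (Fin 2) ℤ) * p⁻¹ = !![3, 10; 1, 3]) ∧
    (¬ ∃ p : Matrix (Fin 2) (Fin 2) ℤ, IsUnit p ∧
        p * (!![2, 3; 3, 4] : Matrix (Fin 2) (Fin 2) ℤ)⁻¹ * p⁻¹ = !![3, 10; 1, 3]) := by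
  constructor
  · rintro ⟨p, hp, h⟩
    have hdet := (Matrix.isUnit_iff_isUnit_det p).mp hp
    have hinv : p⁻¹ * p = 1 := Matrix.nonsing_inv_mul p hdet
    have hmul : p * !![2, 3; 3, 4] = !![3, 10; 1, 3] * p := by
      calc p * !![2, 3; 3, 4] = p * !![2, 3; 3, 4] * (p⁻¹ * p) := by rw [hinv, mul_one]
        _ = (p * !![2, 3; 3, 4] * p⁻¹) * p := by simp only [mul_assoc]
        _ = !![3, 10; 1, 3] * p := by rw [h]
    have e00 := congrFun (congrFun hmul 0) 0
    have e01 := congrFun (congrFun hmul 0) 1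
    have e10 := congrFun (congrFun hmul 1) 0
    have e11 := congrFun (congrFun hmul 1) 1
    simp [Matrix.mul_apply, Fin.sum_univ_two] at e00 e01 e10 e11
    set x := p 0 0 with hx
    set y := p 0 1 with hy
    set z := p 1 0 with hz
    set w := p 1 1 with hw
    have hX : x = 3 * w - z := by omega
    have hY : y = 3 * z + w := by omega
    have hd : x * w - y * z = 1 ∨ x * w - y * z = -1 := by
      have := Int.isUnit_iff.mp hdet
      rw [Matrix.det_fin_two] at this
      exact this
    have key : ∀ z w : ZMod 5, ¬((3 * w - z) * w - (3 * z + w) * z = 1 ∨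
        (3 * w - z) * w - (3 * z + w) * z = -1) := by decide
    rw [hX, hY] at hd
    refine key (z : ZMod 5) (w : ZMod 5) ?_
    rcases hd with hd | hd
    · left
      have := congrArg (Int.cast : ℤ → ZMod 5) hd
      push_cast at this ⊢
      exact this
    · right
      have := congrArg (Int.cast : ℤ → ZMod 5) hd
      push_cast at this ⊢
      exact this
  · rintro ⟨p, hp, h⟩
    have hdet := (Matrix.isUnit_iff_isUnit_det p).mp hp
    have hinv : p⁻¹ * p = 1 := Matrix.nonsing_inv_mul p hdet
    have hA : (!![2, 3; 3, 4] : Matrix (Fin 2) (Fin 2) ℤ)⁻¹ = !![-4, 3; 3, -2] := by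
      have hRI : Ring.inverse (-1 : ℤ) = -1 := by
        simpa using Ring.inverse_unit (-1 : ℤˣ)
      rw [Matrix.inv_def]
      simp [Matrix.adjugate_fin_two, Matrix.det_fin_two]
      norm_num [hRI]
    rw [hA] at h
    have hmul : p * !![-4, 3; 3, -2] = !![3, 10; 1, 3] * p := by
      calc p * !![-4, 3; 3, -2] = p * !![-4, 3; 3, -2] * (p⁻¹ * p) := by rw [hinv, mul_one]
        _ = (p * !![-4, 3; 3, -2] * p⁻¹) * p := by simp only [mul_assoc]
        _ = !![3, 10; 1, 3] * p := by rw [h]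
    have e00 := congrFun (congrFun hmul 0) 0
    have e01 := congrFun (congrFun hmul 0) 1
    have e10 := congrFun (congrFun hmul 1) 0
    have e11 := congrFun (congrFun hmul 1) 1
    simp [Matrix.mul_apply, Fin.sum_univ_two] at e00 e01 e10 e11
    have hd : p 0 0 * p 1 1 - p 0 1 * p 1 0 = 1 ∨ p 0 0 * p 1 1 - p 0 1 * p 1 0 = -1 := by
      have := Int.isUnit_iff.mp hdet
      rw [Matrix.det_fin_two] at this
      exact this
    have hz : p 1 0 = 0 := by omega
    have hw : p 1 1 = 0 := by omega
    rw [hz, hw] at hd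
    omega
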